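/- For all nonempty types X and Y, the double star DS(X,Y) has an irreducible proper distinguishing edge colouring, i.e., there exist a type C and a proper distinguishing edge colouring c : E(DS(X,Y)) → C such that no nontrivial merge of two colours of c is a proper distinguishing edge colouring. -/

import Mathlib

universe u v w

/-- An edge colouring `c` is distinguishing if the identity is the only
automorphism of `G` preserving `c` (where an automorphism `φ` maps an edge
`{u, v}` to the edge `{φ u, φ v}`). -/
def EdgeDistinguishing {V : Type u} {C : Type w} (G : SimpleGraph V) (c : G.edgeSet → C) : Prop :=
  ∀ φ : G ≃g G, (∀ e : G.edgeSet, c (φ.mapEdgeSet e) = c e) → ∀ x : V, φ x = x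

/-- An edge colouring is proper if distinct edges sharing a common endpoint
receive distinct colours. -/
def ProperEdgeColoring {V : Type u} {C : Type w} (G : SimpleGraph V) (c : G.edgeSet → C) : Prop :=
  ∀ e f : G.edgeSet, e ≠ f → (∃ x : V, x ∈ (e : Sym2 V) ∧ x ∈ (f : Sym2 V)) → c e ≠ c f

open Classical in
/-- The map merging colour `b` into colour `a`. -/
noncomputable def mergeMap {C : Type w} (a b : C) : C → C :=
  fun x => if x = b then a else x

/-- The base relation of the double star `DS(X, Y)`: the centre `x'` (encoded as
`Sum.inr (Sum.inr true)`) is joined to the centre `y'` (encoded as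
`Sum.inr (Sum.inr false)`) and to every vertex of `X`, and `y'` is joined to
every vertex of `Y`. -/
def DSRel (X : Type u) (Y : Type v) : (X ⊕ Y ⊕ Bool) → (X ⊕ Y ⊕ Bool) → Prop
  | Sum.inl _, Sum.inr (Sum.inr true) => True
  | Sum.inr (Sum.inl _), Sum.inr (Sum.inr false) => True
  | Sum.inr (Sum.inr true), Sum.inr (Sum.inr false) => True
  | _, _ => False

/-- The double star `DS(X, Y)`. -/
def DS (X : Type u) (Y : Type v) : SimpleGraph (X ⊕ Y ⊕ Bool) :=
  SimpleGraph.fromRel (DSRel X Y)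

namespace DSAux

open Function Set

variable {X : Type u} {Y : Type v} {C : Type w}

/-- the centre on the X side -/
abbrev xc : X ⊕ Y ⊕ Bool := Sum.inr (Sum.inr true)
/-- the centre on the Y side -/
abbrev yc : X ⊕ Y ⊕ Bool := Sum.inr (Sum.inr false)

lemma adj_iff (u w : X ⊕ Y ⊕ Bool) :
    (DS X Y).Adj u w ↔ u ≠ w ∧ (DSRel X Y u w ∨ DSRel X Y w u) := by
  simp [DS, SimpleGraph.fromRel_adj]

lemma adj_x (x : X) : (DS X Y).Adj (Sum.inl x) xc := by simp [adj_iff, DSRel]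

lemma adj_y (y : Y) : (DS X Y).Adj (Sum.inr (Sum.inl y)) (yc : X ⊕ Y ⊕ Bool) := by
  simp [adj_iff, DSRel]

lemma adj_c : (DS X Y).Adj (xc : X ⊕ Y ⊕ Bool) yc := by simp [adj_iff, DSRel]

/-- the X-edges -/
def eX (x : X) : (DS X Y).edgeSet := ⟨s(Sum.inl x, xc), by
  rw [SimpleGraph.mem_edgeSet]; exact adj_x x⟩

/-- the Y-edges -/
def eY (y : Y) : (DS X Y).edgeSet := ⟨s(Sum.inr (Sum.inl y), yc), by
  rw [SimpleGraph.mem_edgeSet]; exact adj_y y⟩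

/-- the central edge -/
def eC : (DS X Y).edgeSet := ⟨s(xc, yc), by
  rw [SimpleGraph.mem_edgeSet]; exact adj_c⟩

/-- every edge of the double star is an X-edge, a Y-edge, or the central edge -/
lemma edge_cases (e : (DS X Y).edgeSet) :
    (∃ x : X, (e : Sym2 (X ⊕ Y ⊕ Bool)) = s(Sum.inl x, xc)) ∨
    (∃ y : Y, (e : Sym2 (X ⊕ Y ⊕ Bool)) = s(Sum.inr (Sum.inl y), yc)) ∨
    (e : Sym2 (X ⊕ Y ⊕ Bool)) = s(xc, yc) := by
  obtain ⟨s, hs⟩ := e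
  induction s using Sym2.inductionOn with
  | hf u w =>
    rw [SimpleGraph.mem_edgeSet, adj_iff] at hs
    obtain ⟨hne, h | h⟩ := hs
    · rcases u with x | y | (_|_) <;> rcases w with x' | y' | (_|_) <;>
        simp only [DSRel] at h <;> simp_all [Sym2.eq_iff]
    · rcases u with x | y | (_|_) <;> rcases w with x' | y' | (_|_) <;>
        simp only [DSRel] at h <;> simp_all [Sym2.eq_iff]

open Classical in
/-- commutative combination of two vertex colours -/
noncomputable def m (z p q : C) : C := if p = z then q else if q = z then p else z

lemma m_comm (z p q : C) : m z p q = m z q p := by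
  unfold m; split_ifs <;> simp_all

/-- colour attached to a vertex -/
def vc (cx : X → C) (cy : Y → C) (z : C) : X ⊕ Y ⊕ Bool → C
  | Sum.inl x => cx x
  | Sum.inr (Sum.inl y) => cy y
  | Sum.inr (Sum.inr _) => z

/-- the edge colouring determined by leaf colours `cx`, `cy` and central colour `z` -/
noncomputable def col (cx : X → C) (cy : Y → C) (z : C) : (DS X Y).edgeSet → C :=
  fun e => Sym2.lift ⟨fun u w => m z (vc cx cy z u) (vc cx cy z w),
    fun _ _ => m_comm z _ _⟩ (e : Sym2 (X ⊕ Y ⊕ Bool))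

variable {cx : X → C} {cy : Y → C} {z : C}

lemma col_x (hzx : ∀ x, cx x ≠ z) (e : (DS X Y).edgeSet) (x : X)
    (h : (e : Sym2 (X ⊕ Y ⊕ Bool)) = s(Sum.inl x, xc)) : col cx cy z e = cx x := by
  simp only [col, h, Sym2.lift_mk, vc, m]
  simp [hzx x]

lemma col_y (hzy : ∀ y, cy y ≠ z) (e : (DS X Y).edgeSet) (y : Y)
    (h : (e : Sym2 (X ⊕ Y ⊕ Bool)) = s(Sum.inr (Sum.inl y), yc)) : col cx cy z e = cy y := by
  simp only [col, h, Sym2.lift_mk, vc, m]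
  simp [hzy y]

lemma col_c (e : (DS X Y).edgeSet)
    (h : (e : Sym2 (X ⊕ Y ⊕ Bool)) = s(xc, yc)) : col cx cy z e = z := by
  simp [col, h, Sym2.lift_mk, vc, m]

lemma mapEdgeSet_val (φ : DS X Y ≃g DS X Y) (e : (DS X Y).edgeSet) :
    ((φ.mapEdgeSet e : (DS X Y).edgeSet) : Sym2 (X ⊕ Y ⊕ Bool)) =
      Sym2.map φ (e : Sym2 (X ⊕ Y ⊕ Bool)) := rfl

/-- the side-swapping permutation of the vertices induced by a bijection `X ≃ Y` -/
def swapEquiv (g : X ≃ Y) : (X ⊕ Y ⊕ Bool) ≃ (X ⊕ Y ⊕ Bool) where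
  toFun := fun u => match u with
    | Sum.inl x => Sum.inr (Sum.inl (g x))
    | Sum.inr (Sum.inl y) => Sum.inl (g.symm y)
    | Sum.inr (Sum.inr b) => Sum.inr (Sum.inr (!b))
  invFun := fun u => match u with
    | Sum.inl x => Sum.inr (Sum.inl (g x))
    | Sum.inr (Sum.inl y) => Sum.inl (g.symm y)
    | Sum.inr (Sum.inr b) => Sum.inr (Sum.inr (!b))
  left_inv := by rintro (x | y | b) <;> simp
  right_inv := by rintro (x | y | b) <;> simp

/-- the side-swapping automorphism of the double star -/
def swapIso (g : X ≃ Y) : DS X Y ≃g DS X Y where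
  toEquiv := swapEquiv g
  map_rel_iff' := by
    rintro (x | y | (_|_)) (x' | y' | (_|_)) <;> simp [adj_iff, DSRel, swapEquiv]

lemma swapIso_x (g : X ≃ Y) (x : X) :
    (swapIso g : (X ⊕ Y ⊕ Bool) → (X ⊕ Y ⊕ Bool)) (Sum.inl x) = Sum.inr (Sum.inl (g x)) := rfl
lemma swapIso_y (g : X ≃ Y) (y : Y) :
    (swapIso g : (X ⊕ Y ⊕ Bool) → (X ⊕ Y ⊕ Bool)) (Sum.inr (Sum.inl y)) = Sum.inl (g.symm y) := rfl
lemma swapIso_xc (g : X ≃ Y) :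
    (swapIso g : (X ⊕ Y ⊕ Bool) → (X ⊕ Y ⊕ Bool)) xc = yc := rfl
lemma swapIso_yc (g : X ≃ Y) :
    (swapIso g : (X ⊕ Y ⊕ Bool) → (X ⊕ Y ⊕ Bool)) yc = xc := rfl

/-- the swap automorphism preserves a colouring whose leaf colours match up -/
lemma swap_preserves (hzx : ∀ x, cx x ≠ z) (hzy : ∀ y, cy y ≠ z) (g : X ≃ Y)
    (hg : ∀ x, cy (g x) = cx x) (e : (DS X Y).edgeSet) :
    col cx cy z ((swapIso g).mapEdgeSet e) = col cx cy z e := by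
  rcases edge_cases e with ⟨x, h⟩ | ⟨y, h⟩ | h
  · rw [col_x hzx e x h]
    have hval : ((swapIso g).mapEdgeSet e : Sym2 (X ⊕ Y ⊕ Bool)) =
        s(Sum.inr (Sum.inl (g x)), yc) := by
      rw [mapEdgeSet_val, h, Sym2.map_pair_eq, swapIso_x, swapIso_xc]
    rw [col_y hzy _ _ hval, hg]
  · rw [col_y hzy e y h]
    have hval : ((swapIso g).mapEdgeSet e : Sym2 (X ⊕ Y ⊕ Bool)) =
        s(Sum.inl (g.symm y), xc) := by
      rw [mapEdgeSet_val, h, Sym2.map_pair_eq, swapIso_y, swapIso_yc]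
    rw [col_x hzx _ _ hval]
    have h2 := hg (g.symm y); rw [g.apply_symm_apply] at h2; exact h2.symm
  · rw [col_c e h]
    have hval : ((swapIso g).mapEdgeSet e : Sym2 (X ⊕ Y ⊕ Bool)) = s(xc, yc) := by
      rw [mapEdgeSet_val, h, Sym2.map_pair_eq, swapIso_xc, swapIso_yc, Sym2.eq_swap]
    rw [col_c _ hval]

lemma not_dist_of_swap (g : X ≃ Y) (c' : (DS X Y).edgeSet → C)
    (hpres : ∀ e, c' ((swapIso g).mapEdgeSet e) = c' e) :
    ¬ EdgeDistinguishing (DS X Y) c' := by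
  intro hD
  have h := hD (swapIso g) hpres xc
  rw [swapIso_xc] at h
  simp at h

/-- matching bijection from equality of ranges of injections -/
lemma exists_matching {cx' : X → C} {cy' : Y → C}
    (hx : Function.Injective cx') (hy : Function.Injective cy')
    (hr : Set.range cx' = Set.range cy') : ∃ g : X ≃ Y, ∀ x, cy' (g x) = cx' x := by
  have h1 : ∀ x, ∃ y, cy' y = cx' x := fun x => (hr ▸ Set.mem_range_self x : cx' x ∈ Set.range cy')
  choose g0 hg0 using h1
  have hinj : Function.Injective g0 := fun x1 x2 h => hx (by rw [← hg0, ← hg0, h])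
  have hsur : Function.Surjective g0 := by
    intro y
    obtain ⟨x, hxe⟩ := (hr.symm ▸ Set.mem_range_self y : cy' y ∈ Set.range cx')
    exact ⟨x, hy (by rw [hg0, hxe])⟩
  exact ⟨Equiv.ofBijective g0 ⟨hinj, hsur⟩, fun x => hg0 x⟩

lemma merge_eq {a b : C} : mergeMap a b b = a := by simp [mergeMap]

lemma merge_ne {a b t : C} (h : t ≠ b) : mergeMap a b t = t := by simp [mergeMap, h]

lemma inj_merge {f : X → C} {a b : C} (hf : Function.Injective f)
    (ha : a ∉ Set.range f) : Function.Injective (mergeMap a b ∘ f) := by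
  intro x1 x2 h
  simp only [Function.comp_apply, mergeMap] at h
  split_ifs at h with h1 h2 h2
  · exact hf (h1.trans h2.symm)
  · exact absurd ⟨x2, h.symm⟩ ha
  · exact absurd ⟨x1, h⟩ ha
  · exact hf h

lemma range_merge {f : X → C} {a b : C} (hb : b ∈ Set.range f) (ha : a ∉ Set.range f) :
    Set.range (mergeMap a b ∘ f) = (Set.range f \ {b}) ∪ {a} := by
  ext t
  constructor
  · rintro ⟨x, rfl⟩
    simp only [Function.comp_apply, mergeMap]
    split_ifs with h1
    · right; rfl
    · left; exact ⟨⟨x, rfl⟩, h1⟩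
  · rintro (⟨⟨x, rfl⟩, hne⟩ | ht)
    · exact ⟨x, merge_ne hne⟩
    · obtain ⟨x, hx⟩ := hb
      exact ⟨x, by rw [Function.comp_apply, hx, merge_eq, ht]⟩

lemma merge_comp_eq {f : X → C} {a b : C} (hb : b ∉ Set.range f) :
    mergeMap a b ∘ f = f := by
  funext x; exact merge_ne (fun h => hb ⟨x, h⟩)

/-- in the cross case, the merged colouring is not distinguishing -/
lemma cross_not_dist {a b : C} (haz : a ≠ z) (hbz : b ≠ z)
    (hzx : ∀ x, cx x ≠ z) (hzy : ∀ y, cy y ≠ z)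
    (hinjx : Function.Injective (mergeMap a b ∘ cx))
    (hinjy : Function.Injective (mergeMap a b ∘ cy))
    (hr : Set.range (mergeMap a b ∘ cx) = Set.range (mergeMap a b ∘ cy)) :
    ¬ EdgeDistinguishing (DS X Y) (mergeMap a b ∘ col cx cy z) := by
  have hzx' : ∀ x, (mergeMap a b ∘ cx) x ≠ z := by
    intro x; simp only [Function.comp_apply, mergeMap]
    split_ifs with h; exacts [haz, hzx x]
  have hzy' : ∀ y, (mergeMap a b ∘ cy) y ≠ z := by
    intro y; simp only [Function.comp_apply, mergeMap]
    split_ifs with h; exacts [haz, hzy y]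
  have hcongr : ∀ e, (mergeMap a b ∘ col cx cy z) e =
      col (mergeMap a b ∘ cx) (mergeMap a b ∘ cy) z e := by
    intro e
    rcases edge_cases e with ⟨x, h⟩ | ⟨y, h⟩ | h
    · rw [Function.comp_apply, col_x hzx e x h, col_x hzx' e x h]; rfl
    · rw [Function.comp_apply, col_y hzy e y h, col_y hzy' e y h]; rfl
    · rw [Function.comp_apply, col_c e h, col_c e h, merge_ne (Ne.symm hbz)]
  obtain ⟨g, hg⟩ := exists_matching hinjx hinjy hr
  apply not_dist_of_swap g
  intro e
  rw [hcongr, hcongr]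
  exact swap_preserves hzx' hzy' g hg e

lemma eX_ne_eX {x1 x2 : X} (h : x1 ≠ x2) : (eX x1 : (DS X Y).edgeSet) ≠ eX x2 := by
  intro he
  have := congrArg Subtype.val he
  simp [eX, Sym2.eq_iff] at this
  exact h this

lemma eY_ne_eY {y1 y2 : Y} (h : y1 ≠ y2) : (eY y1 : (DS X Y).edgeSet) ≠ eY y2 := by
  intro he
  have := congrArg Subtype.val he
  simp [eY, Sym2.eq_iff] at this
  exact h this

lemma eX_ne_eC (x : X) : (eX x : (DS X Y).edgeSet) ≠ eC := by
  intro he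
  have := congrArg Subtype.val he
  simp [eX, eC, Sym2.eq_iff] at this

lemma eY_ne_eC (y : Y) : (eY y : (DS X Y).edgeSet) ≠ eC := by
  intro he
  have := congrArg Subtype.val he
  simp [eY, eC, Sym2.eq_iff] at this

lemma col_eX (hzx : ∀ x, cx x ≠ z) (x : X) : col cx cy z (eX x) = cx x :=
  col_x hzx _ x rfl
lemma col_eY (hzy : ∀ y, cy y ≠ z) (y : Y) : col cx cy z (eY y) = cy y :=
  col_y hzy _ y rfl
lemma col_eC : col cx cy z (eC : (DS X Y).edgeSet) = z := col_c _ rfl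

/-- the main general construction -/
theorem general
    (hcx : Function.Injective cx) (hcy : Function.Injective cy)
    (hzx : ∀ x, cx x ≠ z) (hzy : ∀ y, cy y ≠ z)
    (hsurj : ∀ t : C, t = z ∨ t ∈ Set.range cx ∨ t ∈ Set.range cy)
    (hne : Set.range cx ≠ Set.range cy)
    (h5 : ∀ b ∈ Set.range cx, b ∉ Set.range cy → ∀ a ∈ Set.range cy, a ∉ Set.range cx →
      (Set.range cx \ {b}) ∪ {a} = Set.range cy)
    (h5' : ∀ b ∈ Set.range cy, b ∉ Set.range cx → ∀ a ∈ Set.range cx, a ∉ Set.range cy →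
      (Set.range cy \ {b}) ∪ {a} = Set.range cx) :
    ProperEdgeColoring (DS X Y) (col cx cy z) ∧
    EdgeDistinguishing (DS X Y) (col cx cy z) ∧
      ∀ a b : C, a ≠ b →
        ¬ (ProperEdgeColoring (DS X Y) (mergeMap a b ∘ col cx cy z) ∧
            EdgeDistinguishing (DS X Y) (mergeMap a b ∘ col cx cy z)) := by
  refine ⟨?_, ?_, ?_⟩
  · -- properness
    rintro e f hef ⟨w, hwe, hwf⟩ hcc
    rcases edge_cases e with ⟨x1, h1⟩ | ⟨y1, h1⟩ | h1 <;>
      rcases edge_cases f with ⟨x2, h2⟩ | ⟨y2, h2⟩ | h2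
    · rw [col_x hzx e x1 h1, col_x hzx f x2 h2] at hcc
      exact hef (Subtype.ext (h1.trans ((hcx hcc) ▸ h2.symm)))
    · rw [h1] at hwe; rw [h2] at hwf
      simp only [Sym2.mem_iff] at hwe hwf
      rcases hwe with rfl | rfl <;> rcases hwf with h | h <;> simp at h
    · rw [col_x hzx e x1 h1, col_c f h2] at hcc
      exact hzx x1 hcc
    · rw [h1] at hwe; rw [h2] at hwf
      simp only [Sym2.mem_iff] at hwe hwf
      rcases hwe with rfl | rfl <;> rcases hwf with h | h <;> simp at h
    · rw [col_y hzy e y1 h1, col_y hzy f y2 h2] at hcc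
      exact hef (Subtype.ext (h1.trans ((hcy hcc) ▸ h2.symm)))
    · rw [col_y hzy e y1 h1, col_c f h2] at hcc
      exact hzy y1 hcc
    · rw [col_c e h1, col_x hzx f x2 h2] at hcc
      exact hzx x2 hcc.symm
    · rw [col_c e h1, col_y hzy f y2 h2] at hcc
      exact hzy y2 hcc.symm
    · exact hef (Subtype.ext (h1.trans h2.symm))
  · -- distinguishing
    intro φ hpres
    have hc0 : col cx cy z (φ.mapEdgeSet eC) = z := by rw [hpres]; exact col_eC
    have hcent : (s(φ xc, φ yc) : Sym2 (X ⊕ Y ⊕ Bool)) = s(xc, yc) := by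
      rcases edge_cases (φ.mapEdgeSet eC) with ⟨x, hx⟩ | ⟨y, hy⟩ | h
      · rw [col_x hzx _ x hx] at hc0; exact absurd hc0 (hzx x)
      · rw [col_y hzy _ y hy] at hc0; exact absurd hc0 (hzy y)
      · rw [mapEdgeSet_val] at h
        have h2 : Sym2.map φ (s(xc, yc) : Sym2 (X ⊕ Y ⊕ Bool)) = s(xc, yc) := h
        rwa [Sym2.map_pair_eq] at h2
    rw [Sym2.eq_iff] at hcent
    have hXmap : ∀ x : X, (s(φ (Sum.inl x), φ xc) : Sym2 (X ⊕ Y ⊕ Bool)) =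
        (φ.mapEdgeSet (eX x) : Sym2 (X ⊕ Y ⊕ Bool)) := by
      intro x
      rw [mapEdgeSet_val]
      have : ((eX x : (DS X Y).edgeSet) : Sym2 (X ⊕ Y ⊕ Bool)) = s(Sum.inl x, xc) := rfl
      rw [this, Sym2.map_pair_eq]
    have hYmap : ∀ y : Y, (s(φ (Sum.inr (Sum.inl y)), φ yc) : Sym2 (X ⊕ Y ⊕ Bool)) =
        (φ.mapEdgeSet (eY y) : Sym2 (X ⊕ Y ⊕ Bool)) := by
      intro y
      rw [mapEdgeSet_val]
      have : ((eY y : (DS X Y).edgeSet) : Sym2 (X ⊕ Y ⊕ Bool)) =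
        s(Sum.inr (Sum.inl y), yc) := rfl
      rw [this, Sym2.map_pair_eq]
    rcases hcent with ⟨hx', hy'⟩ | ⟨hx', hy'⟩
    · -- side-fixing case
      have hX : ∀ x : X, φ (Sum.inl x) = Sum.inl x := by
        intro x
        have hpx : col cx cy z (φ.mapEdgeSet (eX x)) = cx x := by
          rw [hpres]; exact col_eX hzx x
        rcases edge_cases (φ.mapEdgeSet (eX x)) with ⟨x2, h2⟩ | ⟨y2, h2⟩ | h2
        · rw [col_x hzx _ x2 h2] at hpx
          have hx2 : x2 = x := hcx hpx
          have hval := (hXmap x).trans h2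
          rw [hx', hx2, Sym2.eq_iff] at hval
          rcases hval with ⟨h, _⟩ | ⟨_, h⟩
          · exact h
          · exact absurd h (by simp)
        · have hval := (hXmap x).trans h2
          rw [hx', Sym2.eq_iff] at hval
          rcases hval with ⟨_, h⟩ | ⟨_, h⟩ <;> exact absurd h (by simp)
        · rw [col_c _ h2] at hpx
          exact absurd hpx.symm (hzx x)
      have hY : ∀ y : Y, φ (Sum.inr (Sum.inl y)) = Sum.inr (Sum.inl y) := by
        intro y
        have hpy : col cx cy z (φ.mapEdgeSet (eY y)) = cy y := by
          rw [hpres]; exact col_eY hzy y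
        rcases edge_cases (φ.mapEdgeSet (eY y)) with ⟨x2, h2⟩ | ⟨y2, h2⟩ | h2
        · have hval := (hYmap y).trans h2
          rw [hy', Sym2.eq_iff] at hval
          rcases hval with ⟨_, h⟩ | ⟨_, h⟩ <;> exact absurd h (by simp)
        · rw [col_y hzy _ y2 h2] at hpy
          have hy2 : y2 = y := hcy hpy
          have hval := (hYmap y).trans h2
          rw [hy', hy2, Sym2.eq_iff] at hval
          rcases hval with ⟨h, _⟩ | ⟨_, h⟩
          · exact h
          · exact absurd h (by simp)
        · rw [col_c _ h2] at hpy
          exact absurd hpy.symm (hzy y)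
      rintro (x | y | (_|_))
      exacts [hX x, hY y, hy', hx']
    · -- side-swapping case: contradiction with hne
      exfalso
      apply hne
      apply Set.Subset.antisymm
      · rintro t ⟨x, rfl⟩
        have hpx : col cx cy z (φ.mapEdgeSet (eX x)) = cx x := by
          rw [hpres]; exact col_eX hzx x
        rcases edge_cases (φ.mapEdgeSet (eX x)) with ⟨x2, h2⟩ | ⟨y2, h2⟩ | h2
        · have hval := (hXmap x).trans h2
          rw [hx', Sym2.eq_iff] at hval
          rcases hval with ⟨_, h⟩ | ⟨_, h⟩ <;> exact absurd h (by simp)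
        · rw [col_y hzy _ y2 h2] at hpx
          exact ⟨y2, hpx⟩
        · rw [col_c _ h2] at hpx
          exact absurd hpx.symm (hzx x)
      · rintro t ⟨y, rfl⟩
        have hpy : col cx cy z (φ.mapEdgeSet (eY y)) = cy y := by
          rw [hpres]; exact col_eY hzy y
        rcases edge_cases (φ.mapEdgeSet (eY y)) with ⟨x2, h2⟩ | ⟨y2, h2⟩ | h2
        · rw [col_x hzx _ x2 h2] at hpy
          exact ⟨x2, hpy⟩
        · have hval := (hYmap y).trans h2
          rw [hy', Sym2.eq_iff] at hval
          rcases hval with ⟨_, h⟩ | ⟨_, h⟩ <;> exact absurd h (by simp)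
        · rw [col_c _ h2] at hpy
          exact absurd hpy.symm (hzy y)
  · -- irreducibility
    rintro a b hab ⟨hP, hD⟩
    by_cases hbz : b = z
    · rcases hsurj a with haz | ⟨xa, hxa⟩ | ⟨ya, hya⟩
      · exact hab (haz.trans hbz.symm)
      · refine hP (eX xa) eC (eX_ne_eC xa) ⟨xc, by simp [eX], by simp [eC]⟩ ?_
        simp only [Function.comp_apply, col_eX hzx, col_eC]
        rw [merge_ne (fun h => hzx xa (h.trans hbz)), hxa, ← hbz, merge_eq]
      · refine hP (eY ya) eC (eY_ne_eC ya) ⟨yc, by simp [eY], by simp [eC]⟩ ?_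
        simp only [Function.comp_apply, col_eY hzy, col_eC]
        rw [merge_ne (fun h => hzy ya (h.trans hbz)), hya, ← hbz, merge_eq]
    · by_cases hbA : b ∈ Set.range cx
      · obtain ⟨xb, hxb⟩ := hbA
        by_cases haz : a = z
        · refine hP (eX xb) eC (eX_ne_eC xb) ⟨xc, by simp [eX], by simp [eC]⟩ ?_
          simp only [Function.comp_apply, col_eX hzx, col_eC]
          rw [hxb, merge_eq, merge_ne (fun h => hbz h.symm), haz]
        · by_cases haA : a ∈ Set.range cx
          · obtain ⟨xa, hxa⟩ := haA
            have hxaxb : cx xa ≠ b := fun h => hab (hxa.symm.trans h)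
            have hne2 : xa ≠ xb := fun h => hxaxb (h ▸ hxb)
            refine hP (eX xa) (eX xb) (eX_ne_eX hne2) ⟨xc, by simp [eX], by simp [eX]⟩ ?_
            simp only [Function.comp_apply, col_eX hzx]
            rw [merge_ne hxaxb, hxa, hxb, merge_eq]
          · have haB : a ∈ Set.range cy := by
              rcases hsurj a with h | h | h
              · exact absurd h haz
              · exact absurd h haA
              · exact h
            by_cases hbB : b ∈ Set.range cy
            · obtain ⟨yb, hyb⟩ := hbB
              obtain ⟨ya, hya⟩ := haB
              have hyayb : cy ya ≠ b := fun h => hab (hya.symm.trans h)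
              have hne2 : ya ≠ yb := fun h => hyayb (h ▸ hyb)
              refine hP (eY ya) (eY yb) (eY_ne_eY hne2) ⟨yc, by simp [eY], by simp [eY]⟩ ?_
              simp only [Function.comp_apply, col_eY hzy]
              rw [merge_ne hyayb, hya, hyb, merge_eq]
            · -- cross case 1 : b ∈ A \ B, a ∈ B \ A
              refine cross_not_dist haz hbz hzx hzy (inj_merge hcx haA)
                (by rw [merge_comp_eq hbB]; exact hcy) ?_ hD
              rw [range_merge ⟨xb, hxb⟩ haA, merge_comp_eq hbB]
              exact h5 b ⟨xb, hxb⟩ hbB a haB haA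
      · have hbB : b ∈ Set.range cy := by
          rcases hsurj b with h | h | h
          · exact absurd h hbz
          · exact absurd h hbA
          · exact h
        obtain ⟨yb, hyb⟩ := hbB
        by_cases haz : a = z
        · refine hP (eY yb) eC (eY_ne_eC yb) ⟨yc, by simp [eY], by simp [eC]⟩ ?_
          simp only [Function.comp_apply, col_eY hzy, col_eC]
          rw [hyb, merge_eq, merge_ne (fun h => hbz h.symm), haz]
        · by_cases haB : a ∈ Set.range cy
          · obtain ⟨ya, hya⟩ := haB
            have hyayb : cy ya ≠ b := fun h => hab (hya.symm.trans h)
            have hne2 : ya ≠ yb := fun h => hyayb (h ▸ hyb)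
            refine hP (eY ya) (eY yb) (eY_ne_eY hne2) ⟨yc, by simp [eY], by simp [eY]⟩ ?_
            simp only [Function.comp_apply, col_eY hzy]
            rw [merge_ne hyayb, hya, hyb, merge_eq]
          · -- cross case 2 : b ∈ B \ A, a ∈ A \ B
            have haA : a ∈ Set.range cx := by
              rcases hsurj a with h | h | h
              · exact absurd h haz
              · exact h
              · exact absurd h haB
            refine cross_not_dist haz hbz hzx hzy
              (by rw [merge_comp_eq hbA]; exact hcx) (inj_merge hcy haB) ?_ hD
            rw [range_merge ⟨yb, hyb⟩ haB, merge_comp_eq hbA]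
            exact (h5' b ⟨yb, hyb⟩ hbA a haA haB).symm

end DSAux

namespace DSAux

variable {X : Type u} {Y : Type v}

/-- wrapper producing the statement of the main theorem -/
theorem general' {C : Type (max u v)} (cx : X → C) (cy : Y → C) (z : C)
    (hcx : Function.Injective cx) (hcy : Function.Injective cy)
    (hzx : ∀ x, cx x ≠ z) (hzy : ∀ y, cy y ≠ z)
    (hsurj : ∀ t : C, t = z ∨ t ∈ Set.range cx ∨ t ∈ Set.range cy)
    (hne : Set.range cx ≠ Set.range cy)
    (h5 : ∀ b ∈ Set.range cx, b ∉ Set.range cy → ∀ a ∈ Set.range cy, a ∉ Set.range cx →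
      (Set.range cx \ {b}) ∪ {a} = Set.range cy)
    (h5' : ∀ b ∈ Set.range cy, b ∉ Set.range cx → ∀ a ∈ Set.range cx, a ∉ Set.range cy →
      (Set.range cy \ {b}) ∪ {a} = Set.range cx) :
    ∃ (C : Type (max u v)) (c : (DS X Y).edgeSet → C),
      ProperEdgeColoring (DS X Y) c ∧ EdgeDistinguishing (DS X Y) c ∧
        ∀ a b : C, a ≠ b → b ∈ Set.range c →
          ¬ (ProperEdgeColoring (DS X Y) (mergeMap a b ∘ c) ∧
              EdgeDistinguishing (DS X Y) (mergeMap a b ∘ c)) := by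
  obtain ⟨h1, h2, h3⟩ := general hcx hcy hzx hzy hsurj hne h5 h5'
  exact ⟨C, col cx cy z, h1, h2, fun a b hab _ => h3 a b hab⟩

/-- Case of a non-surjective embedding `X ↪ Y`. -/
theorem caseI (i : X ↪ Y) (hns : ¬ Function.Surjective i) :
    ∃ (C : Type (max u v)) (c : (DS X Y).edgeSet → C),
      ProperEdgeColoring (DS X Y) c ∧ EdgeDistinguishing (DS X Y) c ∧
        ∀ a b : C, a ≠ b → b ∈ Set.range c →
          ¬ (ProperEdgeColoring (DS X Y) (mergeMap a b ∘ c) ∧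
              EdgeDistinguishing (DS X Y) (mergeMap a b ∘ c)) := by
  refine general' (C := ULift.{u} (Option Y))
    (fun x => ⟨some (i x)⟩) (fun y => ⟨some y⟩) ⟨none⟩ ?_ ?_ ?_ ?_ ?_ ?_ ?_ ?_
  · intro x1 x2 h; exact i.injective (by simpa using h)
  · intro y1 y2 h; simpa using h
  · intro x h; simpa using h
  · intro y h; simpa using h
  · rintro ⟨_ | y⟩
    · exact Or.inl rfl
    · exact Or.inr (Or.inr ⟨y, rfl⟩)
  · intro h
    apply hns
    intro y
    have hy : (⟨some y⟩ : ULift.{u} (Option Y)) ∈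
        Set.range fun x => (⟨some (i x)⟩ : ULift.{u} (Option Y)) := by
      rw [h]; exact ⟨y, rfl⟩
    obtain ⟨x, hx⟩ := hy
    exact ⟨x, by simpa using hx⟩
  · rintro b ⟨x, rfl⟩ hbB
    exact absurd ⟨i x, rfl⟩ hbB
  · rintro b _ _ a ⟨x, rfl⟩ haB
    exact absurd ⟨i x, rfl⟩ haB

/-- Case of a non-surjective embedding `Y ↪ X`. -/
theorem caseI' (j : Y ↪ X) (hns : ¬ Function.Surjective j) :
    ∃ (C : Type (max u v)) (c : (DS X Y).edgeSet → C),
      ProperEdgeColoring (DS X Y) c ∧ EdgeDistinguishing (DS X Y) c ∧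
        ∀ a b : C, a ≠ b → b ∈ Set.range c →
          ¬ (ProperEdgeColoring (DS X Y) (mergeMap a b ∘ c) ∧
              EdgeDistinguishing (DS X Y) (mergeMap a b ∘ c)) := by
  refine general' (C := ULift.{v} (Option X))
    (fun x => ⟨some x⟩) (fun y => ⟨some (j y)⟩) ⟨none⟩ ?_ ?_ ?_ ?_ ?_ ?_ ?_ ?_
  · intro x1 x2 h; simpa using h
  · intro y1 y2 h; exact j.injective (by simpa using h)
  · intro x h; simpa using h
  · intro y h; simpa using h
  · rintro ⟨_ | x⟩
    · exact Or.inl rfl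
    · exact Or.inr (Or.inl ⟨x, rfl⟩)
  · intro h
    apply hns
    intro x
    have hx : (⟨some x⟩ : ULift.{v} (Option X)) ∈
        Set.range fun y => (⟨some (j y)⟩ : ULift.{v} (Option X)) := by
      rw [← h]; exact ⟨x, rfl⟩
    obtain ⟨y, hy⟩ := hx
    exact ⟨y, by simpa using hy⟩
  · rintro b _ _ a ⟨y, rfl⟩ haA
    exact absurd ⟨j y, rfl⟩ haA
  · rintro b ⟨y, rfl⟩ hbA
    exact absurd ⟨j y, rfl⟩ hbA

open Classical in
/-- Case of a bijection `X ≃ Y`. -/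
theorem caseII [Nonempty Y] (g : X ≃ Y) :
    ∃ (C : Type (max u v)) (c : (DS X Y).edgeSet → C),
      ProperEdgeColoring (DS X Y) c ∧ EdgeDistinguishing (DS X Y) c ∧
        ∀ a b : C, a ≠ b → b ∈ Set.range c →
          ¬ (ProperEdgeColoring (DS X Y) (mergeMap a b ∘ c) ∧
              EdgeDistinguishing (DS X Y) (mergeMap a b ∘ c)) := by
  obtain ⟨y0⟩ : Nonempty Y := inferInstance
  set cx : X → ULift.{u} (Option (Option Y)) :=
    fun x => if g x = y0 then ⟨some none⟩ else ⟨some (some (g x))⟩ with hcxdef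
  set cy : Y → ULift.{u} (Option (Option Y)) := fun y => ⟨some (some y)⟩ with hcydef
  have cx_eq : ∀ x, g x ≠ y0 → cx x = ⟨some (some (g x))⟩ := fun x h => if_neg h
  have cx_eq0 : ∀ x, g x = y0 → cx x = ⟨some none⟩ := fun x h => if_pos h
  have mem_cx : ∀ y : Y, y ≠ y0 →
      (⟨some (some y)⟩ : ULift.{u} (Option (Option Y))) ∈ Set.range cx := by
    intro y hy
    refine ⟨g.symm y, ?_⟩
    rw [cx_eq _ (by rw [g.apply_symm_apply]; exact hy)]
    simp
  have not_mem_cy : (⟨some none⟩ : ULift.{u} (Option (Option Y))) ∉ Set.range cy := by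
    rintro ⟨y, hy⟩; simp [hcydef] at hy
  have mem0_cx : (⟨some none⟩ : ULift.{u} (Option (Option Y))) ∈ Set.range cx :=
    ⟨g.symm y0, cx_eq0 _ (by simp)⟩
  refine general' cx cy ⟨none⟩ ?_ ?_ ?_ ?_ ?_ ?_ ?_ ?_
  · intro x1 x2 h
    by_cases h1 : g x1 = y0 <;> by_cases h2 : g x2 = y0
    · exact g.injective (h1.trans h2.symm)
    · rw [cx_eq0 _ h1, cx_eq _ h2] at h; simp at h
    · rw [cx_eq _ h1, cx_eq0 _ h2] at h; simp at h
    · rw [cx_eq _ h1, cx_eq _ h2] at h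
      exact g.injective (by simpa using h)
  · intro y1 y2 h; simpa [hcydef] using h
  · intro x h
    by_cases h1 : g x = y0
    · rw [cx_eq0 _ h1] at h; simp at h
    · rw [cx_eq _ h1] at h; simp at h
  · intro y h; simp [hcydef] at h
  · rintro ⟨_ | (_ | y)⟩
    · exact Or.inl rfl
    · exact Or.inr (Or.inl mem0_cx)
    · exact Or.inr (Or.inr ⟨y, rfl⟩)
  · intro h
    rw [h] at mem0_cx
    exact not_mem_cy mem0_cx
  · -- h5
    rintro b ⟨xb, rfl⟩ hbB a ⟨ya, rfl⟩ haA
    have hgxb : g xb = y0 := by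
      by_contra h
      exact hbB ⟨g xb, (cx_eq _ h).symm⟩
    have hya : ya = y0 := by
      by_contra h
      exact haA (mem_cx ya h)
    rw [cx_eq0 _ hgxb, hya]
    ext t
    simp only [Set.mem_union, Set.mem_diff, Set.mem_singleton_iff, Set.mem_range]
    constructor
    · rintro (⟨⟨x1, rfl⟩, ht⟩ | rfl)
      · have h1 : g x1 ≠ y0 := fun h => ht (cx_eq0 _ h)
        exact ⟨g x1, (cx_eq _ h1).symm⟩
      · exact ⟨y0, rfl⟩
    · rintro ⟨y, rfl⟩
      by_cases hy : y = y0
      · subst hy; exact Or.inr rfl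
      · refine Or.inl ⟨mem_cx y hy, ?_⟩
        simp [hcydef]
  · -- h5'
    rintro b ⟨yb, rfl⟩ hbA a ⟨xa, rfl⟩ haB
    have hyb : yb = y0 := by
      by_contra h
      exact hbA (mem_cx yb h)
    have hgxa : g xa = y0 := by
      by_contra h
      exact haB ⟨g xa, (cx_eq _ h).symm⟩
    rw [cx_eq0 _ hgxa, hyb]
    ext t
    simp only [Set.mem_union, Set.mem_diff, Set.mem_singleton_iff, Set.mem_range]
    constructor
    · rintro (⟨⟨y1, rfl⟩, ht⟩ | rfl)
      · have h1 : y1 ≠ y0 := by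
          intro h; subst h; exact ht rfl
        exact mem_cx y1 h1
      · exact mem0_cx
    · rintro ⟨x, rfl⟩
      by_cases hx : g x = y0
      · exact Or.inr (cx_eq0 _ hx)
      · refine Or.inl ⟨⟨g x, (cx_eq _ hx).symm⟩, ?_⟩
        rw [cx_eq _ hx]
        simp [hcydef]
        exact hx

end DSAux

/-- for all nonempty types `X` and `Y`, the double star `DS(X, Y)`
has an irreducible proper distinguishing edge colouring. -/
theorem stmt7 (X : Type u) (Y : Type v) [Nonempty X] [Nonempty Y] :
    ∃ (C : Type (max u v)) (c : (DS X Y).edgeSet → C),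
      ProperEdgeColoring (DS X Y) c ∧ EdgeDistinguishing (DS X Y) c ∧
        ∀ a b : C, a ≠ b → b ∈ Set.range c →
          ¬ (ProperEdgeColoring (DS X Y) (mergeMap a b ∘ c) ∧
              EdgeDistinguishing (DS X Y) (mergeMap a b ∘ c)) := by
  rcases Function.Embedding.total X Y with h | h
  · obtain i := Classical.choice h
    by_cases hs : Function.Surjective (i : X → Y)
    · exact DSAux.caseII (Equiv.ofBijective i ⟨i.injective, hs⟩)
    · exact DSAux.caseI i hs
  · obtain j := Classical.choice h
    by_cases hs : Function.Surjective (j : Y → X)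
    · exact DSAux.caseII (Equiv.ofBijective j ⟨j.injective, hs⟩).symm
    · exact DSAux.caseI' j hs
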